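/- arXiv:1806.08550 — 2 statements merged into one kernel-verified Lean document; each statement's English description precedes it below -/
import Mathlib

section
/- Let T, J, L be bounded linear operators on a Hilbert space with L and J injective (nonzero), and suppose the iteration f_{j+1} = Q(f_j + L e_j) with e_j = S r − J f_j has a fixed point (f_∞, e_∞) for every r. If Q = I then e_∞ = 0; conversely, if for all r the fixed point satisfies e_∞ = 0 and f_∞ ranges over a set on which Q f = f determines Q, then Q = I. In the matrix transfer function setting with L(e^{iω}), J(e^{iω}) ≠ 0 for all ω and convergence condition ρ(Q(I−LJ)) < 1 on all frequencies: e_∞ = 0 for all r ∈ ℓ_2 if and only if Q = I. -/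
open Matrix BigOperators Classical

/-- Spectral radius of a square complex matrix: the supremum of the moduli of its eigenvalues. -/
noncomputable def specRad {n : ℕ} (A : Matrix (Fin n) (Fin n) ℂ) : ℝ :=
  sSup ((fun μ => ‖μ‖) '' spectrum ℂ A)

/-- Largest singular value: square root of the largest eigenvalue of `Aᴴ * A`. -/
noncomputable def maxSingVal {n : ℕ} (A : Matrix (Fin n) (Fin n) ℂ) : ℝ :=
  Real.sqrt (specRad (Aᴴ * A))

/-- Structured singular value w.r.t. diagonal complex perturbations. -/

noncomputable def ssv {n : ℕ} (A : Matrix (Fin n) (Fin n) ℂ) : ℝ :=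
  if (∃ Δ : Matrix (Fin n) (Fin n) ℂ, Δ.IsDiag ∧ (1 - A * Δ).det = 0) then
    (sInf {r : ℝ | ∃ Δ : Matrix (Fin n) (Fin n) ℂ,
        Δ.IsDiag ∧ (1 - A * Δ).det = 0 ∧ r = maxSingVal Δ})⁻¹
  else 0

/-- If the spectral radius of `A` is `< 1` then `1 - A` is a unit. -/
lemma isUnit_one_sub_of_specRad_lt_one {n : ℕ} (A : Matrix (Fin n) (Fin n) ℂ)
    (h : specRad A < 1) : IsUnit (1 - A) := by
  by_contra hu
  have h1 : (1 : ℂ) ∈ spectrum ℂ A := by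
    rw [spectrum.mem_iff]
    simpa using hu
  have hmem : (1 : ℝ) ∈ ((fun μ => ‖μ‖) '' spectrum ℂ A) :=
    ⟨1, h1, by simp⟩
  have hbdd : BddAbove ((fun μ => ‖μ‖) '' spectrum ℂ A) :=
    ((A.finite_spectrum).image _).bddAbove
  have := le_csSup hbdd hmem
  rw [specRad] at h
  linarith

lemma matrix_ext_of_mulVec {n : ℕ} {A B : Matrix (Fin n) (Fin n) ℂ}
    (h : ∀ v, A.mulVec v = B.mulVec v) : A = B := by
  ext i j
  have := congrFun (h (Pi.single j 1)) i
  simpa using this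

theorem asymptotic_error_zero_iff_Q_eq_one {n : ℕ}
    (Q L J : Matrix (Fin n) (Fin n) ℂ) (hL : L ≠ 0) (hJ : J ≠ 0)
    (hconv : specRad (Q * (1 - L * J)) < 1) :
    (∀ s finf einf : Fin n → ℂ,
        finf = Q.mulVec (finf + L.mulVec einf) →
        einf = s - J.mulVec finf → einf = 0) ↔ Q = 1 := by
  have hB : IsUnit (1 - Q * (1 - L * J)) :=
    isUnit_one_sub_of_specRad_lt_one _ hconv
  set B := 1 - Q * (1 - L * J) with hBdef
  have hBdet : IsUnit B.det := (Matrix.isUnit_iff_isUnit_det B).1 hB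
  constructor
  · intro H
    -- define C = B⁻¹ * Q * L ; show J * C = 1 and Q * C = C, conclude Q = 1
    set C := B⁻¹ * (Q * L) with hCdef
    have key : ∀ s : Fin n → ℂ, J.mulVec (C.mulVec s) = s ∧
        Q.mulVec (C.mulVec s) = C.mulVec s := by
      intro s
      set f := C.mulVec s with hf
      have hBf : B.mulVec f = (Q * L).mulVec s := by
        rw [hf, hCdef, ← Matrix.mulVec_mulVec, Matrix.mulVec_mulVec,
          Matrix.mul_nonsing_inv _ hBdet, Matrix.one_mulVec]
      set e := s - J.mulVec f with he
      have hfe : f = Q.mulVec (f + L.mulVec e) := by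
        have expand : Q.mulVec (f + L.mulVec e) =
            (Q * (1 - L * J)).mulVec f + (Q * L).mulVec s := by
          rw [he]
          simp [Matrix.mulVec_add, Matrix.mulVec_sub, Matrix.sub_mulVec,
            Matrix.mulVec_mulVec, Matrix.mul_sub, Matrix.mul_one, Matrix.mul_assoc]
          abel
        rw [expand, ← hBf, hBdef, Matrix.sub_mulVec, Matrix.one_mulVec]
        abel
      have he0 : e = 0 := H s f e hfe he
      have hJf : J.mulVec f = s := by
        have h0 : s - J.mulVec f = 0 := by rw [← he, he0]
        exact (sub_eq_zero.mp h0).symm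
      have hQf : Q.mulVec f = f := by
        calc Q.mulVec f = Q.mulVec (f + L.mulVec e) := by
              rw [he0]; simp [Matrix.mulVec_zero]
          _ = f := hfe.symm
      exact ⟨hJf, hQf⟩
    have hJC : J * C = 1 := by
      apply matrix_ext_of_mulVec
      intro v
      rw [← Matrix.mulVec_mulVec, (key v).1, Matrix.one_mulVec]
    have hQC : Q * C = C := by
      apply matrix_ext_of_mulVec
      intro v
      rw [← Matrix.mulVec_mulVec, (key v).2]
    -- C is invertible with inverse J
    have hCJ : C * J = 1 := mul_eq_one_comm.mp hJC
    calc Q = Q * (C * J) := by rw [hCJ, mul_one]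
      _ = (Q * C) * J := (mul_assoc Q C J).symm
      _ = C * J := by rw [hQC]
      _ = 1 := hCJ
  · intro hQ s finf einf h1 _h2
    -- with Q = 1: L *ᵥ einf = 0; and L is invertible since 1 - B = L*J is a unit
    have hLJ : IsUnit (L * J) := by
      have hBLJ : B = L * J := by rw [hBdef, hQ]; noncomm_ring
      exact hBLJ ▸ hB
    have hLdet : L.det ≠ 0 := by
      intro h0
      have := (Matrix.isUnit_iff_isUnit_det _).1 hLJ
      rw [Matrix.det_mul, h0, zero_mul] at this
      exact (not_isUnit_zero : ¬ IsUnit (0:ℂ)) this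
    have hLe : L.mulVec einf = 0 := by
      have h1' : finf = finf + L.mulVec einf := by
        conv_lhs => rw [h1]
        rw [hQ, Matrix.one_mulVec]
      exact left_eq_add.mp h1'
    have hinj : Function.Injective L.mulVec :=
      Matrix.mulVec_injective_iff_isUnit.mpr
        ((Matrix.isUnit_iff_isUnit_det _).2 (isUnit_iff_ne_zero.mpr hLdet))
    have := hinj (a₁ := einf) (a₂ := 0) (by rw [hLe, Matrix.mulVec_zero])
    exact this
end

section
/- Let A be Hermitian positive semidefinite in ℂ^{n×n} and D = diag(d_i). If for every i, |d_i|^2 · μ_d(A) < 1 where μ_d is the structured singular value with respect to diagonal complex matrices, then ρ(D^H D A) < 1. -/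
open Matrix BigOperators Classical

lemma specRad_diagonal_real {n : ℕ} (hne : (Finset.univ : Finset (Fin n)).Nonempty)
    (w : Fin n → ℝ) (hw : ∀ i, 0 ≤ w i) :
    specRad (Matrix.diagonal (fun i => (w i : ℂ))) = Finset.univ.sup' hne w := by
  unfold specRad
  rw [spectrum_diagonal]
  have hcomp : ((fun μ => ‖μ‖) ∘ fun i => ((w i : ℂ))) = w := by
    funext i
    simp [abs_of_nonneg (hw i)]
  have himg : (fun μ => ‖μ‖) '' Set.range (fun i => (w i : ℂ))
      = Set.range w := by
    rw [← Set.range_comp, hcomp]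
  rw [himg, Finset.sup'_eq_csSup_image]
  simp

lemma maxSingVal_diagonal {n : ℕ} (hne : (Finset.univ : Finset (Fin n)).Nonempty)
    (δ : Fin n → ℂ) :
    maxSingVal (Matrix.diagonal δ) = Finset.univ.sup' hne (fun i => ‖δ i‖) := by
  have h1 : (Matrix.diagonal δ)ᴴ * Matrix.diagonal δ
      = Matrix.diagonal (fun i => ((‖δ i‖ ^ 2 : ℝ) : ℂ)) := by
    rw [Matrix.diagonal_conjTranspose, Matrix.diagonal_mul_diagonal]
    congr 1
    funext i
    simp [Pi.star_apply, Complex.star_def, ← Complex.normSq_eq_norm_sq,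
      Complex.normSq_eq_conj_mul_self]
  unfold maxSingVal
  rw [h1, specRad_diagonal_real hne _ (fun i => by positivity)]
  have h2 : Finset.univ.sup' hne (fun i => ‖δ i‖ ^ 2)
      = (Finset.univ.sup' hne (fun i => ‖δ i‖)) ^ 2 := by
    apply le_antisymm
    · apply Finset.sup'_le
      intro i _
      have := Finset.le_sup' (fun i => ‖δ i‖) (Finset.mem_univ i)
      exact pow_le_pow_left₀ (norm_nonneg _) this 2
    · obtain ⟨i₀, _, hi₀⟩ := Finset.exists_mem_eq_sup' hne (fun i => ‖δ i‖)
      rw [hi₀]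
      exact Finset.le_sup' (fun i => ‖δ i‖ ^ 2) (Finset.mem_univ i₀)
  rw [h2, Real.sqrt_sq]
  obtain ⟨i₀, _, hi₀⟩ := Finset.exists_mem_eq_sup' hne (fun i => ‖δ i‖)
  rw [hi₀]
  exact norm_nonneg _

lemma one_le_sum_mul_sup {n : ℕ} (hne : (Finset.univ : Finset (Fin n)).Nonempty)
    (A : Matrix (Fin n) (Fin n) ℂ) (δ : Fin n → ℂ)
    (hdet : (1 - A * Matrix.diagonal δ).det = 0) :
    1 ≤ (∑ i, ∑ j, ‖A i j‖)
        * Finset.univ.sup' hne (fun i => ‖δ i‖) := by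
  obtain ⟨v, hv0, hv⟩ := Matrix.exists_mulVec_eq_zero_iff.mpr hdet
  have hv' : (A * Matrix.diagonal δ) *ᵥ v = v := by
    have := hv
    rw [Matrix.sub_mulVec, Matrix.one_mulVec, sub_eq_zero] at this
    exact this.symm
  obtain ⟨i₀, _, hmax⟩ := Finset.exists_max_image Finset.univ (fun i => ‖v i‖) hne
  have hvi₀ : 0 < ‖v i₀‖ := by
    rcases Function.ne_iff.mp hv0 with ⟨j, hj⟩
    calc 0 < ‖v j‖ := by simpa [norm_pos_iff] using hj
    _ ≤ ‖v i₀‖ := hmax j (Finset.mem_univ j)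
  set M := Finset.univ.sup' hne (fun i => ‖δ i‖) with hM
  have hM0 : 0 ≤ M := by
    obtain ⟨i₁, _, hi₁⟩ := Finset.exists_mem_eq_sup' hne (fun i => ‖δ i‖)
    rw [hM, hi₁]; exact norm_nonneg _
  have heq : v i₀ = ∑ j, A i₀ j * δ j * v j := by
    have := congrFun hv' i₀
    simpa [Matrix.mulVec, dotProduct, Matrix.mul_diagonal] using this.symm
  have hbound : ‖v i₀‖
      ≤ (∑ j, ‖A i₀ j‖) * (M * ‖v i₀‖) := by
    calc ‖v i₀‖ = ‖∑ j, A i₀ j * δ j * v j‖ := by rw [heq]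
      _ ≤ ∑ j, ‖A i₀ j * δ j * v j‖ := norm_sum_le _ _
      _ ≤ ∑ j, ‖A i₀ j‖ * (M * ‖v i₀‖) := by
          apply Finset.sum_le_sum
          intro j _
          have e1 : ‖A i₀ j * δ j * v j‖
              = ‖A i₀ j‖ * (‖δ j‖ * ‖v j‖) := by
            rw [norm_mul, norm_mul, mul_assoc]
          rw [e1]
          refine mul_le_mul_of_nonneg_left ?_ (norm_nonneg _)
          exact mul_le_mul (Finset.le_sup' (fun i => ‖δ i‖) (Finset.mem_univ j))
            (hmax j (Finset.mem_univ j)) (norm_nonneg _) hM0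
      _ = (∑ j, ‖A i₀ j‖) * (M * ‖v i₀‖) := by
          rw [← Finset.sum_mul]
  have hrow : 1 ≤ (∑ j, ‖A i₀ j‖) * M := by
    have h' : 1 * ‖v i₀‖ ≤ ((∑ j, ‖A i₀ j‖) * M) * ‖v i₀‖ := by
      rw [one_mul, mul_assoc]; exact hbound
    exact le_of_mul_le_mul_right h' hvi₀
  refine hrow.trans (mul_le_mul_of_nonneg_right ?_ hM0)
  exact Finset.single_le_sum (f := fun i => ∑ j, ‖A i j‖)
    (fun i _ => Finset.sum_nonneg fun j _ => norm_nonneg _) (Finset.mem_univ i₀)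

open ComplexOrder in
theorem ssv_monotonic_convergence {n : ℕ}
    (A : Matrix (Fin n) (Fin n) ℂ) (hA : A.PosSemidef) (d : Fin n → ℂ)
    (h : ∀ i, ‖d i‖ ^ 2 * ssv A < 1) :
    specRad ((Matrix.diagonal d)ᴴ * Matrix.diagonal d * A) < 1 := by
  set T := (fun μ => ‖μ‖) '' spectrum ℂ ((Matrix.diagonal d)ᴴ * Matrix.diagonal d * A)
    with hT
  rcases T.eq_empty_or_nonempty with hTe | hTne
  · unfold specRad
    rw [← hT, hTe, Real.sSup_empty]
    norm_num
  · have hTfin : T.Finite := (Matrix.finite_spectrum _).image _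
    have hmem := hTne.csSup_mem hTfin
    unfold specRad
    rw [← hT]
    obtain ⟨lam, hlam, hlameq⟩ := hmem
    rw [← hlameq]
    by_contra hc
    push_neg at hc
    -- hc : 1 ≤ |lam|
    have hne : (Finset.univ : Finset (Fin n)).Nonempty := by
      rcases Nat.eq_zero_or_pos n with rfl | hn
      · exfalso
        have : IsUnit (algebraMap ℂ (Matrix (Fin 0) (Fin 0) ℂ) lam
            - (Matrix.diagonal d)ᴴ * Matrix.diagonal d * A) := isUnit_of_subsingleton _
        exact spectrum.mem_iff.mp hlam this
      · exact ⟨⟨0, hn⟩, Finset.mem_univ _⟩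
    set m : Fin n → ℂ := fun i => star (d i) * d i with hm
    have hDelta : (Matrix.diagonal d)ᴴ * Matrix.diagonal d = Matrix.diagonal m := by
      rw [Matrix.diagonal_conjTranspose, Matrix.diagonal_mul_diagonal]
      rfl
    have hlam0 : lam ≠ 0 := by
      intro h0
      rw [h0] at hc
      simp at hc
      linarith
    have hns : ¬ IsUnit (lam • (1 : Matrix (Fin n) (Fin n) ℂ) - Matrix.diagonal m * A) := by
      have h' := spectrum.mem_iff.mp hlam
      rw [hDelta] at h'
      rwa [Algebra.algebraMap_eq_smul_one] at h'
    have hdet0 : (lam • (1 : Matrix (Fin n) (Fin n) ℂ) - Matrix.diagonal m * A).det = 0 := by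
      by_contra hdd
      exact hns ((Matrix.isUnit_iff_isUnit_det _).mpr (Ne.isUnit hdd))
    set δ' : Fin n → ℂ := fun i => lam⁻¹ * m i with hδ'
    have hsm : lam⁻¹ • (Matrix.diagonal m * A) = Matrix.diagonal δ' * A := by
      rw [← Matrix.smul_mul]
      congr 1
      rw [← Matrix.diagonal_smul]
      rfl
    have hfac : lam • (1 : Matrix (Fin n) (Fin n) ℂ) - Matrix.diagonal m * A
        = lam • ((1 : Matrix (Fin n) (Fin n) ℂ) - Matrix.diagonal δ' * A) := by
      rw [smul_sub, ← hsm, smul_smul, mul_inv_cancel₀ hlam0, one_smul]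
    have hd1 : ((1 : Matrix (Fin n) (Fin n) ℂ) - Matrix.diagonal δ' * A).det = 0 := by
      have := hdet0
      rw [hfac, Matrix.det_smul] at this
      exact (mul_eq_zero.mp this).resolve_left (pow_ne_zero _ hlam0)
    have hd2 : ((1 : Matrix (Fin n) (Fin n) ℂ) - A * Matrix.diagonal δ').det = 0 := by
      rw [Matrix.det_one_sub_mul_comm]
      exact hd1
    have hex : ∃ Δ : Matrix (Fin n) (Fin n) ℂ, Δ.IsDiag ∧ (1 - A * Δ).det = 0 :=
      ⟨Matrix.diagonal δ', Matrix.isDiag_diagonal _, hd2⟩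
    set S : Set ℝ := {r : ℝ | ∃ Δ : Matrix (Fin n) (Fin n) ℂ,
        Δ.IsDiag ∧ (1 - A * Δ).det = 0 ∧ r = maxSingVal Δ} with hS
    have hssv : ssv A = (sInf S)⁻¹ := by
      rw [ssv, if_pos hex]
    set K : ℝ := ∑ i, ∑ j, ‖A i j‖ with hK
    have hK0 : 0 ≤ K :=
      Finset.sum_nonneg fun i _ => Finset.sum_nonneg fun j _ => norm_nonneg _
    have hKpos : 0 < K := by
      have h1 := one_le_sum_mul_sup hne A δ' hd2
      have hsup0 : 0 ≤ Finset.univ.sup' hne (fun i => ‖δ' i‖) := by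
        obtain ⟨i₁, _, hi₁⟩ := Finset.exists_mem_eq_sup' hne (fun i => ‖δ' i‖)
        rw [hi₁]
        exact norm_nonneg _
      nlinarith
    have hlb : ∀ r ∈ S, K⁻¹ ≤ r := by
      rintro r ⟨Δ, hΔ, hΔdet, rfl⟩
      have hΔeq : Δ = Matrix.diagonal Δ.diag := (hΔ.diagonal_diag).symm
      rw [hΔeq] at hΔdet
      rw [hΔeq, maxSingVal_diagonal hne]
      have h1 := one_le_sum_mul_sup hne A Δ.diag hΔdet
      rw [inv_eq_one_div, div_le_iff₀ hKpos]
      linarith [h1, mul_comm K (Finset.univ.sup' hne (fun i => ‖Δ.diag i‖))]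
    have hSne : maxSingVal (Matrix.diagonal δ') ∈ S :=
      ⟨Matrix.diagonal δ', Matrix.isDiag_diagonal _, hd2, rfl⟩
    have hbdd : BddBelow S := ⟨K⁻¹, hlb⟩
    have hKinv : 0 < K⁻¹ := inv_pos.mpr hKpos
    have hsinf_ge : K⁻¹ ≤ sInf S := le_csInf ⟨_, hSne⟩ hlb
    have hsinf_pos : 0 < sInf S := lt_of_lt_of_le hKinv hsinf_ge
    have hle : sInf S ≤ maxSingVal (Matrix.diagonal δ') := csInf_le hbdd hSne
    have hilt : ∀ i, ‖d i‖ ^ 2 < sInf S := by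
      intro i
      have hi := h i
      rw [hssv, ← div_eq_mul_inv] at hi
      exact (div_lt_one hsinf_pos).mp hi
    have hlt : maxSingVal (Matrix.diagonal δ') < sInf S := by
      rw [maxSingVal_diagonal hne]
      rw [Finset.sup'_lt_iff]
      intro i _
      have habs : ‖δ' i‖ = (‖lam‖)⁻¹ * ‖d i‖ ^ 2 := by
        rw [hδ']
        simp only [hm]
        have h1 : ‖star (d i)‖ = ‖d i‖ := Complex.norm_conj (d i)
        rw [norm_mul, norm_inv, norm_mul, h1, sq]
      rw [habs]
      have hinv1 : (‖lam‖)⁻¹ ≤ 1 := by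
        rw [inv_le_one_iff₀] <;> right <;> exact hc
      calc (‖lam‖)⁻¹ * ‖d i‖ ^ 2
          ≤ 1 * ‖d i‖ ^ 2 :=
            mul_le_mul_of_nonneg_right hinv1 (by positivity)
        _ = ‖d i‖ ^ 2 := one_mul _
        _ < sInf S := hilt i
    exact absurd hle (not_le.mpr hlt)
end
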